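/- Nonemptiness of the Dhar set: Let d be a divisor on a connected weightless loopless multigraph G that is linearly equivalent to an effective divisor but is not itself effective, and let V₀ = {v ∈ V : d(v) < 0}. If n is such that the Dhar sequence satisfies V_{n+1} = V_n, then V_n ≠ V; that is, the Dhar set W = V \ V_n is nonempty. -/

import Mathlib

open Finset

section Preliminaries

variable {V : Type} [Fintype V] [DecidableEq V]

/-- The degree of a divisor on a graph with vertex set `V`. -/
def degDiv (d : V → ℤ) : ℤ := ∑ v, d v

/-- A divisor is effective if it is nonnegative at every vertex. -/
def Effective (d : V → ℤ) : Prop := ∀ v, 0 ≤ d v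

/-- The principal divisor `t_Z` associated to a subset `Z` of vertices, for the
graph with edge multiplicity function `m`. -/
def tZ (m : V → V → ℕ) (Z : Finset V) : V → ℤ := fun v =>
  if v ∈ Z then -(∑ u ∈ Zᶜ, (m v u : ℤ)) else ∑ u ∈ Z, (m v u : ℤ)

/-- Two divisors are linearly equivalent if their difference lies in the subgroup
generated by the divisors `t_Z`. -/
def LinEquiv (m : V → V → ℕ) (d d' : V → ℤ) : Prop :=
  d - d' ∈ AddSubgroup.closure (Set.range (tZ m))

/-- The simple graph associated to an edge multiplicity function `m`
(an edge between distinct `u`, `v` whenever `m u v > 0`; loops are discarded). -/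
def assocGraph (m : V → V → ℕ) : SimpleGraph V where
  Adj u v := u ≠ v ∧ (0 < m u v ∨ 0 < m v u)
  symm := ⟨fun _ _ h => ⟨h.1.symm, h.2.symm⟩⟩
  loopless := ⟨fun _ h => h.1 rfl⟩

end Preliminaries

section Dhar

variable {V : Type} [Fintype V] [DecidableEq V]

/-- One step of the Dhar algorithm: add to `S` all vertices `v ∉ S` with
`∑_{u ∈ S} m v u > d v`. -/
def dharStep (m : V → V → ℕ) (d : V → ℤ) (S : Finset V) : Finset V :=
  S ∪ (Sᶜ.filter fun v => d v < ∑ u ∈ S, (m v u : ℤ))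

/-- The Dhar sequence `V₀ ⊆ V₁ ⊆ V₂ ⊆ …` starting from `V₀`. -/
def dharSeq (m : V → V → ℕ) (d : V → ℤ) (V0 : Finset V) : ℕ → Finset V
  | 0 => V0
  | n + 1 => dharStep m d (dharSeq m d V0 n)

end Dhar

section Aux

variable {V : Type} [Fintype V] [DecidableEq V]

/-- The (negated) Laplacian applied to an integer function. -/
def Lap (m : V → V → ℕ) (x : V → ℤ) : V → ℤ := fun v => ∑ u, (m v u : ℤ) * (x v - x u)

lemma lap_add (m : V → V → ℕ) (x y : V → ℤ) : Lap m (x + y) = Lap m x + Lap m y := by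
  funext v
  simp only [Lap, Pi.add_apply]
  rw [← Finset.sum_add_distrib]
  refine Finset.sum_congr rfl fun u _ => by ring

lemma tZ_eq_lap (m : V → V → ℕ) (Z : Finset V) :
    tZ m Z = Lap m (fun v => if v ∈ Z then (-1 : ℤ) else 0) := by
  funext v
  simp only [tZ, Lap]
  rw [← Finset.sum_add_sum_compl Z]
  by_cases hv : v ∈ Z
  · simp only [hv, if_true]
    have h1 : ∑ u ∈ Z, (m v u : ℤ) * ((-1 : ℤ) - if u ∈ Z then (-1 : ℤ) else 0) = 0 :=
      Finset.sum_eq_zero fun u hu => by simp [hu]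
    have h2 : ∑ u ∈ Zᶜ, (m v u : ℤ) * ((-1 : ℤ) - if u ∈ Z then (-1 : ℤ) else 0)
        = ∑ u ∈ Zᶜ, -(m v u : ℤ) :=
      Finset.sum_congr rfl fun u hu => by simp [Finset.mem_compl.mp hu]
    rw [h1, h2, zero_add, Finset.sum_neg_distrib]
  · simp only [hv, if_false]
    have h1 : ∑ u ∈ Z, (m v u : ℤ) * ((0 : ℤ) - if u ∈ Z then (-1 : ℤ) else 0)
        = ∑ u ∈ Z, (m v u : ℤ) :=
      Finset.sum_congr rfl fun u hu => by simp [hu]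
    have h2 : ∑ u ∈ Zᶜ, (m v u : ℤ) * ((0 : ℤ) - if u ∈ Z then (-1 : ℤ) else 0) = 0 :=
      Finset.sum_eq_zero fun u hu => by simp [Finset.mem_compl.mp hu]
    rw [h1, h2, add_zero]

lemma linEquiv_exists_lap (m : V → V → ℕ) (d f : V → ℤ) (h : LinEquiv m d f) :
    ∃ x : V → ℤ, d - f = Lap m x := by
  have hle : AddSubgroup.closure (Set.range (tZ m))
      ≤ (AddMonoidHom.mk' (Lap m) (lap_add m)).range := by
    rw [AddSubgroup.closure_le]
    rintro _ ⟨Z, rfl⟩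
    exact ⟨_, (tZ_eq_lap m Z).symm⟩
  obtain ⟨x, hx⟩ := hle h
  exact ⟨x, hx.symm⟩

end Aux

/-- **Nonemptiness of the Dhar set.** -/
theorem dhar_set_nonempty {V : Type} [Fintype V] [DecidableEq V]
    (m : V → V → ℕ) (hsymm : ∀ u v, m u v = m v u) (hloop : ∀ v, m v v = 0)
    (hconn : (assocGraph m).Connected)
    (d : V → ℤ) (heff : ∃ f : V → ℤ, Effective f ∧ LinEquiv m d f)
    (hne : ¬ Effective d) (n : ℕ)
    (hstab : dharSeq m d (univ.filter fun v => d v < 0) (n + 1)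
        = dharSeq m d (univ.filter fun v => d v < 0) n) :
    dharSeq m d (univ.filter fun v => d v < 0) n ≠ univ := by
  intro hV
  obtain ⟨f, hf, hlin⟩ := heff
  obtain ⟨x, hx⟩ := linEquiv_exists_lap m d f hlin
  have hd : ∀ v, d v = f v + Lap m x v := by
    intro v
    have := congrFun hx v
    simp only [Pi.sub_apply] at this
    linarith
  obtain ⟨w, hw⟩ : ∃ v, d v < 0 := by
    by_contra h
    push_neg at h
    exact hne fun v => h v
  haveI : Nonempty V := ⟨w⟩
  obtain ⟨v0, -, hv0⟩ := Finset.exists_max_image (univ : Finset V) x univ_nonempty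
  have key : ∀ (S : Finset V), (∀ u ∈ S, x u ≠ x v0) → ∀ v, x v = x v0 →
      ∑ u ∈ S, (m v u : ℤ) ≤ d v := by
    intro S hS v hv
    have h1 : ∑ u ∈ S, (m v u : ℤ) ≤ Lap m x v := by
      have hterm : ∀ u ∈ S, (m v u : ℤ) ≤ (m v u : ℤ) * (x v - x u) := by
        intro u hu
        have h2 : x u + 1 ≤ x v0 := lt_of_le_of_ne (hv0 u (mem_univ u)) (hS u hu)
        have h3 : (0 : ℤ) ≤ (m v u : ℤ) := Int.ofNat_nonneg _
        nlinarith
      calc ∑ u ∈ S, (m v u : ℤ) ≤ ∑ u ∈ S, (m v u : ℤ) * (x v - x u) :=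
            Finset.sum_le_sum hterm
        _ ≤ ∑ u, (m v u : ℤ) * (x v - x u) := by
            refine Finset.sum_le_sum_of_subset_of_nonneg (subset_univ S) fun u _ _ => ?_
            have h3 : (0 : ℤ) ≤ (m v u : ℤ) := Int.ofNat_nonneg _
            have h4 : x u ≤ x v := hv ▸ hv0 u (mem_univ u)
            nlinarith
    have := hf v
    rw [hd v]
    linarith
  have burn : ∀ i, ∀ v, x v = x v0 → v ∉ dharSeq m d (univ.filter fun v => d v < 0) i := by
    intro i
    induction i with
    | zero =>
      intro v hv hmem
      simp only [dharSeq, Finset.mem_filter] at hmem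
      have := key ∅ (by simp) v hv
      simp only [Finset.sum_empty] at this
      linarith [hmem.2]
    | succ i ih =>
      intro v hv hmem
      simp only [dharSeq, dharStep, Finset.mem_union, Finset.mem_filter] at hmem
      rcases hmem with h | h
      · exact ih v hv h
      · have hkey := key (dharSeq m d (univ.filter fun v => d v < 0) i)
          (fun u hu heq => ih u heq hu) v hv
        linarith [h.2]
  have := burn n v0 rfl
  rw [hV] at this
  exact this (mem_univ v0)
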